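/- With C, g₁, g₂, Φ as above (C compact convex with nonempty interior, g_i continuous concave, Φ(μ) = ∫ g₁^∨ dμ + g₂^∨(-E[μ]) + max_C(g₁+g₂)), the function Φ is nonpositive on ℰ, and Φ(μ) = 0 if and only if supp(μ) ⊆ F(g₁,g₂) and E[μ] ∈ B(g₁,g₂), where for any maximizer x of g₁+g₂, B(g₁,g₂) = ∂g₁(x) ∩ (-∂g₂(x)) and F(g₁,g₂) is the minimal face of ∂g₁(x) containing B(g₁,g₂). -/

import Mathlib

open MeasureTheory RealInnerProductSpace

/-- The sup-differential of a concave function `g` at `x` relative to `C`. -/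
def supDiff {n : ℕ} (C : Set (EuclideanSpace ℝ (Fin n)))
    (g : EuclideanSpace ℝ (Fin n) → ℝ) (x : EuclideanSpace ℝ (Fin n)) :
    Set (EuclideanSpace ℝ (Fin n)) :=
  {u | ∀ z ∈ C, g z - g x ≤ ⟪u, z - x⟫}

/-- The Legendre–Fenchel dual `g^∨(u) = inf_{x ∈ C} (⟨u,x⟩ - g(x))`. -/
noncomputable def lfDual {n : ℕ} (C : Set (EuclideanSpace ℝ (Fin n)))
    (g : EuclideanSpace ℝ (Fin n) → ℝ) (u : EuclideanSpace ℝ (Fin n)) : ℝ :=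
  sInf ((fun x => ⟪u, x⟫ - g x) '' C)

/-- The functional `Φ(μ) = ∫ g₁^∨ dμ + g₂^∨(-E[μ]) + max_C (g₁+g₂)`. -/
noncomputable def phiFun {n : ℕ} (C : Set (EuclideanSpace ℝ (Fin n)))
    (g₁ g₂ : EuclideanSpace ℝ (Fin n) → ℝ)
    (μ : Measure (EuclideanSpace ℝ (Fin n))) : ℝ :=
  (∫ u, lfDual C g₁ u ∂μ) + lfDual C g₂ (-(∫ u, u ∂μ)) +
    sSup ((fun x => g₁ x + g₂ x) '' C)

/-- The support of a measure: points all of whose neighborhoods have positive measure. -/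
def msupport {n : ℕ} (μ : Measure (EuclideanSpace ℝ (Fin n))) :
    Set (EuclideanSpace ℝ (Fin n)) :=
  {x | ∀ U : Set (EuclideanSpace ℝ (Fin n)), IsOpen U → x ∈ U → 0 < μ U}

lemma msupport_ae {n : ℕ} (μ : Measure (EuclideanSpace ℝ (Fin n))) :
    ∀ᵐ u ∂μ, u ∈ msupport μ := by
  rw [ae_iff]
  obtain ⟨b, hbc, -, hb⟩ := TopologicalSpace.exists_countable_basis (EuclideanSpace ℝ (Fin n))
  set S : Set (Set (EuclideanSpace ℝ (Fin n))) := {s ∈ b | μ s = 0} with hS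
  have hsub : {u | ¬ u ∈ msupport μ} ⊆ ⋃₀ S := by
    intro y hy
    simp only [Set.mem_setOf_eq, msupport, not_forall] at hy
    obtain ⟨U, hUo, hyU, hU0⟩ := hy
    have hU0' : μ U = 0 := by simpa [pos_iff_ne_zero] using hU0
    obtain ⟨v, hvb, hyv, hvU⟩ := hb.exists_subset_of_mem_open hyU hUo
    exact ⟨v, ⟨hvb, le_antisymm (hU0' ▸ measure_mono hvU) zero_le⟩, hyv⟩
  have h0 : μ (⋃₀ S) = 0 :=
    (measure_sUnion_null_iff (hbc.mono (Set.sep_subset _ _))).2 fun s hs => hs.2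
  exact le_antisymm (le_trans (measure_mono hsub) h0.le) zero_le

variable {n : ℕ}

set_option maxHeartbeats 2000000 in
lemma key_barycenter : ∀ (d : ℕ) (K F' : Set (EuclideanSpace ℝ (Fin n)))
    (μ : Measure (EuclideanSpace ℝ (Fin n))), IsProbabilityMeasure μ →
    IsClosed K → Convex ℝ K → Module.finrank ℝ (vectorSpan ℝ K) ≤ d →
    Integrable (fun u => u) μ → (∀ᵐ u ∂μ, u ∈ K) →
    IsExtreme ℝ K F' → (∫ u, u ∂μ) ∈ F' →
    ∀ y, (∀ U : Set (EuclideanSpace ℝ (Fin n)), IsOpen U → y ∈ U → 0 < μ U) → y ∈ F' := by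
  intro d
  induction d using Nat.strong_induction_on with
  | _ d IH =>
  intro K F' μ hprob hKc hKconv hrank hint hae hext hβF
  set β : EuclideanSpace ℝ (Fin n) := ∫ u, u ∂μ with hβ
  have hβK : β ∈ K := hext.1 hβF
  have hcompl : μ Kᶜ = 0 := by
    exact ae_iff.mp hae
  by_cases hA : ∃ f : (EuclideanSpace ℝ (Fin n)) →L[ℝ] ℝ,
      (∀ u ∈ K, f u ≤ f β) ∧ ∃ z ∈ K, f z < f β
  · obtain ⟨f, hfle, z, hzK, hzlt⟩ := hA
    set G : Set (EuclideanSpace ℝ (Fin n)) := K ∩ {u | f u = f β} with hG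
    have hfint : Integrable (fun u => f u) μ := f.integrable_comp hint
    have hmean : ∫ u, f u ∂μ = f β := f.integral_comp_comm hint
    have h0 : ∫ u, (f β - f u) ∂μ = 0 := by
      rw [integral_sub (integrable_const _) hfint, integral_const, hmean]
      simp
    have hnn : 0 ≤ᵐ[μ] fun u => f β - f u := hae.mono fun u hu => sub_nonneg.2 (hfle u hu)
    have haez := (integral_eq_zero_iff_of_nonneg_ae hnn ((integrable_const _).sub hfint)).mp h0
    have haeG : ∀ᵐ u ∂μ, u ∈ G := by
      filter_upwards [hae, haez] with u hu h
      refine ⟨hu, ?_⟩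
      have : f β - f u = 0 := h
      simp only [Set.mem_setOf_eq]
      linarith
    have hGclosed : IsClosed G := hKc.inter (isClosed_eq f.continuous continuous_const)
    have hGconv : Convex ℝ G := by
      refine hKconv.inter ?_
      intro u hu v hv a b ha hb hab
      simp only [Set.mem_setOf_eq] at hu hv ⊢
      rw [map_add, f.map_smul, f.map_smul, smul_eq_mul, smul_eq_mul, hu, hv]
      linear_combination f β * hab
    have hGext : IsExtreme ℝ K G := by
      refine ⟨Set.inter_subset_left, ?_⟩
      rintro x₁ h₁ x₂ h₂ p hp ⟨a, b, ha, hb, hab, rfl⟩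
      have e : a * f x₁ + b * f x₂ = f β := by
        have h := hp.2
        simp only [Set.mem_setOf_eq, map_add] at h
        rw [f.map_smul, f.map_smul, smul_eq_mul, smul_eq_mul] at h
        exact h
      have l1 := hfle x₁ h₁
      have l2 := hfle x₂ h₂
      have e1 : f β ≤ f x₁ := by
        by_contra hcon
        push_neg at hcon
        have h1 := mul_lt_mul_of_pos_left hcon ha
        have h2 := mul_le_mul_of_nonneg_left l2 hb.le
        have h3 : a * f β + b * f β = f β := by linear_combination f β * hab
        linarith
      have e2 : f β ≤ f x₂ := by
        by_contra hcon
        push_neg at hcon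
        have h1 := mul_lt_mul_of_pos_left hcon hb
        have h2 := mul_le_mul_of_nonneg_left l1 ha.le
        have h3 : a * f β + b * f β = f β := by linear_combination f β * hab
        linarith
      exact ⟨h₁, le_antisymm l1 e1⟩
    have hext' : IsExtreme ℝ G (F' ∩ G) := by
      refine ⟨Set.inter_subset_right, ?_⟩
      intro x₁ h₁ x₂ h₂ p hp hseg
      have hf₁ := hext.2 (hGext.1 h₁) (hGext.1 h₂) hp.1 hseg
      exact ⟨hf₁, h₁⟩
    have hβG : β ∈ F' ∩ G := ⟨hβF, hβK, rfl⟩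
    have hlt : vectorSpan ℝ G < vectorSpan ℝ K := by
      refine lt_of_le_of_ne (vectorSpan_mono ℝ Set.inter_subset_left) fun he => ?_
      have hker : vectorSpan ℝ G ≤ LinearMap.ker (f : EuclideanSpace ℝ (Fin n) →ₗ[ℝ] ℝ) := by
        rw [vectorSpan_def]
        refine Submodule.span_le.2 ?_
        rintro v ⟨p, hp, q, hq, rfl⟩
        simp only [SetLike.mem_coe, LinearMap.mem_ker, vsub_eq_sub,
          ContinuousLinearMap.coe_coe, map_sub]
        rw [hp.2, hq.2, sub_self]
      have hzmem : z - β ∈ vectorSpan ℝ K := by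
        have := vsub_mem_vectorSpan ℝ hzK hβK
        simpa using this
      rw [← he] at hzmem
      have := hker hzmem
      simp only [LinearMap.mem_ker, ContinuousLinearMap.coe_coe, map_sub] at this
      linarith
    have hrk : Module.finrank ℝ (vectorSpan ℝ G) < d :=
      lt_of_lt_of_le (Submodule.finrank_lt_finrank_of_lt hlt) hrank
    intro y hy
    exact (IH _ hrk G (F' ∩ G) μ hprob hGclosed hGconv le_rfl hint haeG hext' hβG y hy).1
  · intro y hy
    have hyK : y ∈ K := by
      by_contra hyK
      have h := hy Kᶜ hKc.isOpen_compl hyK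
      rw [hcompl] at h
      exact lt_irrefl _ h
    suffices hKF : ∀ z ∈ K, z ∈ F' by exact hKF y hyK
    intro z hzK
    by_cases hzβ : z = β
    · exact hzβ ▸ hβF
    have hext_pt : ∃ t : ℝ, 0 < t ∧ β + t • (β - z) ∈ K := by
      by_contra hne
      push_neg at hne
      apply hA
      set V := vectorSpan ℝ K with hV
      set D : Set V := {dd : V | β + (dd : EuclideanSpace ℝ (Fin n)) ∈ K} with hD
      have hDconv : Convex ℝ D := by
        intro p hp q hq a b ha hb hab
        have h := hKconv hp hq ha hb hab
        simp only [hD, Set.mem_setOf_eq] at *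
        have hc : a • (β + (p : EuclideanSpace ℝ (Fin n))) + b • (β + (q : EuclideanSpace ℝ (Fin n)))
            = β + ((a • p + b • q : V) : EuclideanSpace ℝ (Fin n)) := by
          push_cast
          rw [smul_add, smul_add, add_add_add_comm, Convex.combo_self hab β]
        rw [← hc]
        exact h
      have h0D : (0 : V) ∈ D := by
        simp only [hD, Set.mem_setOf_eq, ZeroMemClass.coe_zero, add_zero]
        exact hβK
      have hsub2 : V ≤ Submodule.map V.subtype (Submodule.span ℝ D) := by
        conv_lhs => rw [hV, vectorSpan_def]
        refine Submodule.span_le.2 ?_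
        rintro v ⟨p, hp, q, hq, rfl⟩
        have hpm : p - β ∈ V := by simpa using vsub_mem_vectorSpan ℝ hp hβK
        have hqm : q - β ∈ V := by simpa using vsub_mem_vectorSpan ℝ hq hβK
        have hdp : (⟨p - β, hpm⟩ : V) ∈ D := by
          simp only [hD, Set.mem_setOf_eq]
          simpa using hp
        have hdq : (⟨q - β, hqm⟩ : V) ∈ D := by
          simp only [hD, Set.mem_setOf_eq]
          simpa using hq
        refine ⟨⟨p - β, hpm⟩ - ⟨q - β, hqm⟩,
          sub_mem (Submodule.subset_span hdp) (Submodule.subset_span hdq), ?_⟩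
        simp only [vsub_eq_sub, Submodule.coe_subtype, AddSubgroupClass.coe_sub]
        abel
      have hspan : Submodule.span ℝ D = ⊤ := by
        rw [eq_top_iff]
        rintro w -
        have hw : (w : EuclideanSpace ℝ (Fin n)) ∈ Submodule.map V.subtype (Submodule.span ℝ D) :=
          hsub2 w.2
        obtain ⟨w', hw', hww⟩ := hw
        have hww' : w' = w := Subtype.ext hww
        exact hww' ▸ hw'
      have haff : affineSpan ℝ D = ⊤ := by
        rw [eq_top_iff]
        rintro w -
        have hw : w ∈ Submodule.span ℝ D := hspan ▸ Submodule.mem_top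
        have hdir : Submodule.span ℝ D ≤ (affineSpan ℝ D).direction := by
          rw [direction_affineSpan, vectorSpan_def]
          refine Submodule.span_le.2 ?_
          intro dd hdd
          exact Submodule.subset_span ⟨dd, hdd, 0, h0D, by simp⟩
        have := AffineSubspace.vadd_mem_of_mem_direction (hdir hw) (mem_affineSpan ℝ h0D)
        simpa using this
      have hne_int : (interior D).Nonempty :=
        hDconv.interior_nonempty_iff_affineSpan_eq_top.mpr haff
      have h0notin : (0 : V) ∉ interior D := by
        intro h0
        obtain ⟨ε, hε, hball⟩ := Metric.isOpen_iff.mp isOpen_interior 0 h0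
        have hdzV : z - β ∈ V := by simpa using vsub_mem_vectorSpan ℝ hzK hβK
        set dz : V := ⟨z - β, hdzV⟩ with hdz
        have hdznz : dz ≠ 0 := by
          intro h
          apply hzβ
          have h2 : z - β = 0 := by simpa [hdz] using congrArg Subtype.val h
          exact sub_eq_zero.mp h2
        have hnz : (0:ℝ) < ‖dz‖ := norm_pos_iff.mpr hdznz
        set t : ℝ := ε / (2 * ‖dz‖) with htdef
        have ht : 0 < t := div_pos hε (by positivity)
        have hmem : -t • dz ∈ Metric.ball (0:V) ε := by
          rw [Metric.mem_ball, dist_zero_right, norm_smul, norm_neg,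
            Real.norm_of_nonneg ht.le, htdef, div_mul_eq_mul_div,
            div_lt_iff₀ (by positivity)]
          nlinarith [mul_pos hε hnz]
        have hD' : -t • dz ∈ D := interior_subset (hball hmem)
        apply hne t ht
        have hcoe : ((-t • dz : V) : EuclideanSpace ℝ (Fin n)) = t • (β - z) := by
          simp only [hdz, Submodule.coe_smul]
          rw [neg_smul, ← smul_neg, neg_sub]
        simp only [hD, Set.mem_setOf_eq, hcoe] at hD'
        exact hD'
      haveI : CompleteSpace V := FiniteDimensional.complete ℝ V
      obtain ⟨f, hf⟩ := geometric_hahn_banach_open_point hDconv.interior isOpen_interior h0notin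
      obtain ⟨d₀, hd₀⟩ := hne_int
      have hf0 : ∀ a ∈ interior D, f a < 0 := by
        intro a ha
        have := hf a ha
        simpa using this
      have hfd₀ : f d₀ < 0 := hf0 d₀ hd₀
      have hfnonpos : ∀ dd ∈ D, f dd ≤ 0 := by
        intro dd hdd
        by_contra hpos
        push_neg at hpos
        set s : ℝ := f dd / (2 * (f dd - f d₀)) with hs
        have hden : 0 < f dd - f d₀ := by linarith
        have hs0 : 0 < s := div_pos hpos (by linarith)
        have hmem := hDconv.combo_interior_closure_mem_interior hd₀ (subset_closure hdd) hs0
          (by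
            have hsle : s ≤ 1/2 := by
              rw [hs, div_le_iff₀ (by linarith)]
              nlinarith
            linarith : (0:ℝ) ≤ 1 - s)
          (by ring)
        have hlt := hf0 _ hmem
        rw [map_add, f.map_smul, f.map_smul, smul_eq_mul, smul_eq_mul] at hlt
        have hval : s * (f dd - f d₀) = f dd / 2 := by
          rw [hs]
          field_simp
        nlinarith
      refine ⟨f.comp V.orthogonalProjectionOnto, ?_, β + (d₀ : EuclideanSpace ℝ (Fin n)), ?_, ?_⟩
      · intro u huK
        have hduV : u - β ∈ V := by simpa using vsub_mem_vectorSpan ℝ huK hβK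
        have hduD : (⟨u - β, hduV⟩ : V) ∈ D := by
          simp only [hD, Set.mem_setOf_eq]
          simpa using huK
        have hle := hfnonpos _ hduD
        have hproj : V.orthogonalProjectionOnto (u - β) = (⟨u - β, hduV⟩ : V) :=
          Submodule.orthogonalProjection_mem_subspace_eq_self (⟨u - β, hduV⟩ : V)
        have key : (f.comp V.orthogonalProjectionOnto) u - (f.comp V.orthogonalProjectionOnto) β
            = f (⟨u - β, hduV⟩ : V) := by
          simp only [ContinuousLinearMap.comp_apply]
          rw [← map_sub, ← map_sub, hproj]
        linarith
      · have hmm := interior_subset hd₀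
        simp only [hD, Set.mem_setOf_eq] at hmm
        exact hmm
      · have hproj₀ : V.orthogonalProjectionOnto (d₀ : EuclideanSpace ℝ (Fin n)) = d₀ :=
          Submodule.orthogonalProjection_mem_subspace_eq_self d₀
        have key : (f.comp V.orthogonalProjectionOnto) (β + (d₀ : EuclideanSpace ℝ (Fin n)))
            - (f.comp V.orthogonalProjectionOnto) β = f d₀ := by
          simp only [ContinuousLinearMap.comp_apply]
          rw [← map_sub, ← map_sub, add_sub_cancel_left, hproj₀]
        linarith
    obtain ⟨t, ht, hwK⟩ := hext_pt
    have hseg : β ∈ openSegment ℝ z (β + t • (β - z)) := by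
      refine ⟨t / (1 + t), 1 / (1 + t), by positivity, by positivity, ?_, ?_⟩
      · field_simp
        ring
      · match_scalars <;> field_simp <;> ring
    exact hext.2 hzK hwK hβF hseg
variable {n : ℕ} {C : Set (EuclideanSpace ℝ (Fin n))} {g : EuclideanSpace ℝ (Fin n) → ℝ}
  {x u v : EuclideanSpace ℝ (Fin n)} {R : ℝ}

lemma lf_bdd (hC : IsCompact C) (hc : ContinuousOn g C) (u : EuclideanSpace ℝ (Fin n)) :
    BddBelow ((fun z => ⟪u, z⟫ - g z) '' C) :=
  (hC.image_of_continuousOn (((continuous_const.inner continuous_id).continuousOn).sub hc)).bddBelow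

lemma lf_le (hC : IsCompact C) (hc : ContinuousOn g C) (hxC : x ∈ C) :
    lfDual C g u ≤ ⟪u, x⟫ - g x :=
  csInf_le (lf_bdd hC hc u) ⟨x, hxC, rfl⟩

lemma mem_supDiff_iff (hC : IsCompact C) (hc : ContinuousOn g C) (hxC : x ∈ C) :
    u ∈ supDiff C g x ↔ ⟪u, x⟫ - g x ≤ lfDual C g u := by
  constructor
  · intro h
    refine le_csInf ⟨_, ⟨x, hxC, rfl⟩⟩ ?_
    rintro b ⟨z, hz, rfl⟩
    have h2 := h z hz
    rw [inner_sub_right] at h2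
    dsimp only
    linarith
  · intro h z hz
    have h2 : lfDual C g u ≤ ⟪u, z⟫ - g z := csInf_le (lf_bdd hC hc u) ⟨z, hz, rfl⟩
    rw [inner_sub_right]
    linarith

lemma lf_lip (hC : IsCompact C) (hc : ContinuousOn g C) (hCne : C.Nonempty)
    (hR : ∀ z ∈ C, ‖z‖ ≤ R) (u v : EuclideanSpace ℝ (Fin n)) :
    lfDual C g u ≤ lfDual C g v + R * ‖u - v‖ := by
  have h : lfDual C g u - R * ‖u - v‖ ≤ lfDual C g v := by
    refine le_csInf (hCne.image _) ?_
    rintro b ⟨z, hz, rfl⟩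
    dsimp only
    have h1 : lfDual C g u ≤ ⟪u, z⟫ - g z := csInf_le (lf_bdd hC hc u) ⟨z, hz, rfl⟩
    have h2 : ⟪u, z⟫ - ⟪v, z⟫ = ⟪u - v, z⟫ := (inner_sub_left _ _ _).symm
    have h3 : ⟪u - v, z⟫ ≤ ‖u - v‖ * ‖z‖ := real_inner_le_norm _ _
    have h4 : ‖u - v‖ * ‖z‖ ≤ ‖u - v‖ * R :=
      mul_le_mul_of_nonneg_left (hR z hz) (norm_nonneg _)
    have h5 : ‖u - v‖ * R = R * ‖u - v‖ := mul_comm _ _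
    linarith
  linarith

lemma lf_cont (hC : IsCompact C) (hc : ContinuousOn g C) (hCne : C.Nonempty)
    (hR : ∀ z ∈ C, ‖z‖ ≤ R) : Continuous (lfDual C g) := by
  have hR0 : 0 ≤ R := le_trans (norm_nonneg _) (hR _ hCne.choose_spec)
  have hl : LipschitzWith (Real.toNNReal R) (lfDual C g) := by
    refine LipschitzWith.of_dist_le_mul fun u v => ?_
    rw [Real.dist_eq, dist_eq_norm, Real.coe_toNNReal R hR0]
    have a1 := lf_lip hC hc hCne hR u v
    have a2 := lf_lip hC hc hCne hR v u
    rw [norm_sub_rev v u] at a2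
    rw [abs_sub_le_iff]
    constructor <;> linarith
  exact hl.continuous

lemma supDiff_closed : IsClosed (supDiff C g x) := by
  have he : supDiff C g x = ⋂ z ∈ C, {u | g z - g x ≤ ⟪u, z - x⟫} := by
    ext u; simp [supDiff]
  rw [he]
  exact isClosed_biInter fun z _ =>
    isClosed_le continuous_const (continuous_id.inner continuous_const)

lemma supDiff_convex : Convex ℝ (supDiff C g x) := by
  intro p hp q hq a b ha hb hab z hz
  have h1 := hp z hz
  have h2 := hq z hz
  rw [inner_add_left, real_inner_smul_left, real_inner_smul_left]
  have h3 : a * (g z - g x) + b * (g z - g x) = g z - g x := by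
    linear_combination (g z - g x) * hab
  have h4 := mul_le_mul_of_nonneg_left h1 ha
  have h5 := mul_le_mul_of_nonneg_left h2 hb
  linarith


set_option maxHeartbeats 1000000 in
/-- `Φ` is nonpositive on `ℰ`, and `Φ(μ) = 0` iff `supp(μ) ⊆ F(g₁,g₂)`
and `E[μ] ∈ B(g₁,g₂)`, where for a maximizer `x` of `g₁+g₂` one sets
`B(g₁,g₂) = ∂g₁(x) ∩ (-∂g₂(x))` and `F(g₁,g₂)` is the minimal face of `∂g₁(x)`
containing `B(g₁,g₂)`. -/
theorem stmt6 {n : ℕ}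
    (C : Set (EuclideanSpace ℝ (Fin n))) (hCcpt : IsCompact C) (hCconv : Convex ℝ C)
    (hCint : (interior C).Nonempty)
    (g₁ g₂ : EuclideanSpace ℝ (Fin n) → ℝ)
    (hg₁ : ConcaveOn ℝ C g₁) (hg₂ : ConcaveOn ℝ C g₂)
    (hc₁ : ContinuousOn g₁ C) (hc₂ : ContinuousOn g₂ C)
    (x : EuclideanSpace ℝ (Fin n))
    (hx : x ∈ {p ∈ C | ∀ y ∈ C, g₁ y + g₂ y ≤ g₁ p + g₂ p})
    (B F : Set (EuclideanSpace ℝ (Fin n)))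
    (hB : B = supDiff C g₁ x ∩ -supDiff C g₂ x)
    (hF : F = ⋂₀ {F' : Set (EuclideanSpace ℝ (Fin n)) |
      IsExtreme ℝ (supDiff C g₁ x) F' ∧ B ⊆ F'})
    (μ : ProbabilityMeasure (EuclideanSpace ℝ (Fin n)))
    (hμ : Integrable (fun u => ‖u‖) (μ : Measure (EuclideanSpace ℝ (Fin n)))) :
    phiFun C g₁ g₂ (μ : Measure (EuclideanSpace ℝ (Fin n))) ≤ 0 ∧
    (phiFun C g₁ g₂ (μ : Measure (EuclideanSpace ℝ (Fin n))) = 0 ↔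
      msupport (μ : Measure (EuclideanSpace ℝ (Fin n))) ⊆ F ∧
        (∫ u, u ∂(μ : Measure (EuclideanSpace ℝ (Fin n)))) ∈ B) := by
  obtain ⟨hxC, hxmax⟩ := hx
  set ν : Measure (EuclideanSpace ℝ (Fin n)) := (μ : Measure (EuclideanSpace ℝ (Fin n))) with hν
  have hprob : IsProbabilityMeasure ν := inferInstance
  have hCne : C.Nonempty := ⟨x, hxC⟩
  obtain ⟨R, hR⟩ := hCcpt.isBounded.exists_norm_le
  have h_id : Integrable (fun u => u) ν := (integrable_norm_iff aestronglyMeasurable_id).mp hμ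
  set β : EuclideanSpace ℝ (Fin n) := ∫ u, u ∂ν with hβdef
  have hM : sSup ((fun p => g₁ p + g₂ p) '' C) = g₁ x + g₂ x := by
    refine IsGreatest.csSup_eq ⟨⟨x, hxC, rfl⟩, ?_⟩
    rintro b ⟨p, hp, rfl⟩
    exact hxmax p hp
  set φ₁ : EuclideanSpace ℝ (Fin n) → ℝ := fun u => lfDual C g₁ u - ⟪u, x⟫ + g₁ x with hφ₁
  set φ₂ : EuclideanSpace ℝ (Fin n) → ℝ := fun v => lfDual C g₂ v - ⟪v, x⟫ + g₂ x with hφ₂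
  have hφ₁nonpos : ∀ u, φ₁ u ≤ 0 := fun u => by
    have h := lf_le (g := g₁) (u := u) hCcpt hc₁ hxC
    simp only [hφ₁]
    linarith
  have hφ₂nonpos : ∀ v, φ₂ v ≤ 0 := fun v => by
    have h := lf_le (g := g₂) (u := v) hCcpt hc₂ hxC
    simp only [hφ₂]
    linarith
  have hcont₁ : Continuous (lfDual C g₁) := lf_cont hCcpt hc₁ hCne hR
  have hint_lf : Integrable (fun u => lfDual C g₁ u) ν := by
    refine Integrable.mono' ((integrable_const (|lfDual C g₁ 0|)).add (hμ.const_mul R))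
      hcont₁.aestronglyMeasurable ?_
    filter_upwards with u
    simp only [Pi.add_apply]
    have a1 := lf_lip hCcpt hc₁ hCne hR u 0
    have a2 := lf_lip hCcpt hc₁ hCne hR 0 u
    rw [sub_zero] at a1
    rw [zero_sub, norm_neg] at a2
    rw [Real.norm_eq_abs, abs_le]
    constructor
    · have h := neg_abs_le (lfDual C g₁ 0)
      linarith
    · have h := le_abs_self (lfDual C g₁ 0)
      linarith
  have hint_inner : Integrable (fun u => ⟪x, u⟫) ν := (innerSL ℝ x).integrable_comp h_id
  have hint_inner' : Integrable (fun u => ⟪u, x⟫) ν := by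
    have he : (fun u : EuclideanSpace ℝ (Fin n) => ⟪u, x⟫) = fun u => ⟪x, u⟫ :=
      funext fun u => real_inner_comm x u
    rw [he]
    exact hint_inner
  have hint_φ₁ : Integrable φ₁ ν := (hint_lf.sub hint_inner').add (integrable_const _)
  have hinner_int : ∫ u, ⟪x, u⟫ ∂ν = ⟪x, β⟫ := by
    have h := (innerSL ℝ x).integral_comp_comm h_id
    simpa using h
  set I₁ : ℝ := ∫ u, φ₁ u ∂ν with hI₁def
  have hI₁nonpos : I₁ ≤ 0 := integral_nonpos fun u => hφ₁nonpos u
  have hsplit : ∫ u, lfDual C g₁ u ∂ν = I₁ + ⟪x, β⟫ - g₁ x := by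
    have hcongr : ∫ u, lfDual C g₁ u ∂ν = ∫ u, (φ₁ u + ⟪x, u⟫ - g₁ x) ∂ν := by
      refine integral_congr_ae (Filter.Eventually.of_forall fun u => ?_)
      simp only [hφ₁]
      rw [real_inner_comm u x]
      ring
    have hint_sum : Integrable (fun u => φ₁ u + ⟪x, u⟫) ν := hint_φ₁.add hint_inner
    rw [hcongr, integral_sub hint_sum (integrable_const _),
      integral_add hint_φ₁ hint_inner, integral_const, hinner_int]
    simp
    rfl
  have hPhi : phiFun C g₁ g₂ ν = I₁ + φ₂ (-β) := by
    rw [phiFun, hM]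
    rw [show (∫ u, u ∂ν) = β from rfl]
    rw [hsplit]
    have h2 : lfDual C g₂ (-β) = φ₂ (-β) + ⟪(-β : EuclideanSpace ℝ (Fin n)), x⟫ - g₂ x := by
      simp only [hφ₂]
      ring
    rw [h2, inner_neg_left]
    have h3 : ⟪x, β⟫ = ⟪β, x⟫ := real_inner_comm β x
    linarith
  have hφ₂β : φ₂ (-β) ≤ 0 := hφ₂nonpos _
  constructor
  · rw [hPhi]
    linarith
  rw [hPhi]
  have hiff : I₁ + φ₂ (-β) = 0 ↔ I₁ = 0 ∧ φ₂ (-β) = 0 := by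
    constructor
    · intro h
      constructor <;> linarith
    · rintro ⟨h1, h2⟩
      rw [h1, h2, add_zero]
  rw [hiff]
  constructor
  · rintro ⟨hI₁, hφ2z⟩
    have haeK : ∀ᵐ u ∂ν, u ∈ supDiff C g₁ x := by
      have hz : (fun u => -φ₁ u) =ᵐ[ν] 0 := by
        refine (integral_eq_zero_iff_of_nonneg_ae
          (Filter.Eventually.of_forall fun u => neg_nonneg.mpr (hφ₁nonpos u)) hint_φ₁.neg).mp ?_
        rw [integral_neg, ← hI₁def, hI₁, neg_zero]
      filter_upwards [hz] with u hu
      have h0 : φ₁ u = 0 := by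
        have : -φ₁ u = 0 := hu
        linarith
      rw [mem_supDiff_iff hCcpt hc₁ hxC]
      simp only [hφ₁] at h0
      linarith
    have hβ₁ : β ∈ supDiff C g₁ x :=
      supDiff_convex.integral_mem supDiff_closed haeK h_id
    have hβ₂ : -β ∈ supDiff C g₂ x := by
      rw [mem_supDiff_iff hCcpt hc₂ hxC]
      simp only [hφ₂] at hφ2z
      linarith
    have hβB : β ∈ B := by
      rw [hB]
      exact ⟨hβ₁, Set.mem_neg.mpr hβ₂⟩
    refine ⟨?_, hβB⟩
    rw [hF]
    intro y hy
    rintro F' ⟨hF'ext, hBF'⟩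
    exact key_barycenter (Module.finrank ℝ (vectorSpan ℝ (supDiff C g₁ x)))
      (supDiff C g₁ x) F' ν hprob supDiff_closed supDiff_convex le_rfl h_id haeK
      hF'ext (hBF' hβB) y hy
  · rintro ⟨hsupp, hβB⟩
    rw [hB] at hβB
    have hβ₂ : -β ∈ supDiff C g₂ x := Set.mem_neg.mp hβB.2
    have hφ2z : φ₂ (-β) = 0 := by
      have h1 := (mem_supDiff_iff hCcpt hc₂ hxC).mp hβ₂
      have h2 := lf_le (g := g₂) (u := -β) hCcpt hc₂ hxC
      simp only [hφ₂]
      linarith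
    refine ⟨?_, hφ2z⟩
    have hFsub : F ⊆ supDiff C g₁ x := by
      rw [hF]
      refine Set.sInter_subset_of_mem ⟨IsExtreme.rfl, ?_⟩
      rw [hB]
      exact Set.inter_subset_left
    have haeK : ∀ᵐ u ∂ν, u ∈ supDiff C g₁ x :=
      (msupport_ae ν).mono fun u hu => hFsub (hsupp hu)
    have hzero : φ₁ =ᵐ[ν] 0 := by
      filter_upwards [haeK] with u hu
      have h1 := (mem_supDiff_iff hCcpt hc₁ hxC).mp hu
      have h2 := lf_le (g := g₁) (u := u) hCcpt hc₁ hxC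
      simp only [hφ₁]
      show lfDual C g₁ u - ⟪u, x⟫ + g₁ x = 0
      linarith
    rw [hI₁def, integral_congr_ae hzero]
    simp
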